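/- Let n ≥ 3 be odd and let B ∈ [−1,1]^{n×n} be skew-symmetric with rank(B) = n−1, admitting a vector y ≠ 0 with yᵀB = 0ᵀ and Σᵢ yᵢ ≠ 0. Let x ∈ S_n satisfy xᵀB = 0ᵀ and suppose x ∈ S_n⁺⁺. If ε ≥ 0 satisfies ε < x_min / φ(B), where x_min = minᵢ xᵢ, then P_B(ε) ⊆ S_n⁺⁺. -/

import Mathlib

open Matrix

/-- The ε-Nash polytope `P_A(ε) = {x ∈ S_n : xᵀA ≥ −ε·1ᵀ componentwise}`. -/
def nashPolytope {n : ℕ} (A : Matrix (Fin n) (Fin n) ℝ) (ε : ℝ) : Set (Fin n → ℝ) :=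
  {x | (∑ i, x i = 1) ∧ ∀ j, -ε ≤ (x ᵥ* A) j}

/-- `φ(A) = max_{j∈[n]} max_{i∈[n]} |(1ᵀA_j⁻¹ − πᵀ)_i|`, where `A_j` is `A` with its
`j`-th column replaced by the all-ones vector and `π` is the unique element of `S_n`
with `πᵀA = 0ᵀ` (passed explicitly). -/
noncomputable def phi {n : ℕ} (A : Matrix (Fin n) (Fin n) ℝ) (π : Fin n → ℝ) : ℝ :=
  ⨆ j : Fin n, ⨆ i : Fin n, |((1 : Fin n → ℝ) ᵥ* (A.updateCol j 1)⁻¹ - π) i|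

/-- Under Condition 1 for `B`, if `x ∈ S_n⁺⁺` satisfies `xᵀB = 0ᵀ` and
`0 ≤ ε < x_min / φ(B)`, then `P_B(ε) ⊆ S_n⁺⁺`. -/
theorem stmt6 (n : ℕ) (hodd : Odd n) (hn : 3 ≤ n)
    (B : Matrix (Fin n) (Fin n) ℝ)
    (hbound : ∀ i j, B i j ∈ Set.Icc (-1 : ℝ) 1)
    (hskew : Bᵀ = -B)
    (hrank : B.rank = n - 1)
    (hker : ∃ y : Fin n → ℝ, y ≠ 0 ∧ y ᵥ* B = 0 ∧ ∑ i, y i ≠ 0)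
    (x : Fin n → ℝ) (hx1 : ∑ i, x i = 1) (hxB : x ᵥ* B = 0)
    (hxpos : ∀ i, 0 < x i)
    (ε : ℝ) (hε0 : 0 ≤ ε) (hε : ε < (⨅ i, x i) / phi B x) :
    nashPolytope B ε ⊆ {z : Fin n → ℝ | (∑ i, z i = 1) ∧ ∀ i, 0 < z i} := by
  classical
  have hn0 : 0 < n := by omega
  have hxne : x ≠ 0 := by
    intro h
    rw [h] at hx1
    simp at hx1
  -- B *ᵥ x = 0
  have hBx : B *ᵥ x = 0 := by
    have h1 : Bᵀ *ᵥ x = 0 := by rw [Matrix.mulVec_transpose, hxB]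
    have h2 : B = -Bᵀ := by rw [hskew, neg_neg]
    rw [h2, Matrix.neg_mulVec, h1, neg_zero]
  -- kernel of B is spanned by x
  have hkerB : ∀ c : Fin n → ℝ, B *ᵥ c = 0 → ∃ α : ℝ, c = α • x := by
    intro c hc
    have hxker : x ∈ LinearMap.ker B.mulVecLin := by
      simp [LinearMap.mem_ker, Matrix.mulVecLin_apply, hBx]
    have hcker : c ∈ LinearMap.ker B.mulVecLin := by
      simp [LinearMap.mem_ker, Matrix.mulVecLin_apply, hc]
    have hspan : Submodule.span ℝ ({x} : Set (Fin n → ℝ)) ≤ LinearMap.ker B.mulVecLin :=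
      (Submodule.span_singleton_le_iff_mem _ _).mpr hxker
    have hfr : Module.finrank ℝ (LinearMap.range B.mulVecLin) +
        Module.finrank ℝ (LinearMap.ker B.mulVecLin) = n := by
      have h := LinearMap.finrank_range_add_finrank_ker B.mulVecLin
      simpa using h
    have hrange : Module.finrank ℝ (LinearMap.range B.mulVecLin) = n - 1 := hrank
    have hker1 : Module.finrank ℝ (LinearMap.ker B.mulVecLin) = 1 := by omega
    have hsp1 : Module.finrank ℝ (Submodule.span ℝ ({x} : Set (Fin n → ℝ))) = 1 :=
      finrank_span_singleton hxne
    have heq : Submodule.span ℝ ({x} : Set (Fin n → ℝ)) = LinearMap.ker B.mulVecLin :=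
      Submodule.eq_of_le_of_finrank_le hspan (by rw [hker1, hsp1])
    rw [← heq] at hcker
    obtain ⟨α, hα⟩ := Submodule.mem_span_singleton.mp hcker
    exact ⟨α, hα.symm⟩
  -- x ᵥ* B_j = e_j
  have hxBj : ∀ j : Fin n, x ᵥ* (B.updateCol j 1) = Pi.single j 1 := by
    intro j
    funext k
    by_cases h : k = j
    · subst h
      simp only [Matrix.vecMul, dotProduct, Matrix.updateCol_apply, if_pos rfl,
        Pi.single_eq_same, Pi.one_apply]
      simp [hx1]
    · have h0 : (x ᵥ* B) k = 0 := by rw [hxB]; rfl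
      simp only [Matrix.vecMul, dotProduct, Matrix.updateCol_apply] at h0 ⊢
      rw [Pi.single_eq_of_ne h]
      rw [← h0]
      apply Finset.sum_congr rfl
      intro m _
      rw [if_neg h]
  -- B_j is invertible
  have hdet : ∀ j : Fin n, IsUnit (B.updateCol j 1).det := by
    intro j
    rw [isUnit_iff_ne_zero]
    intro hdet0
    obtain ⟨c, hc0, hc⟩ := (Matrix.exists_mulVec_eq_zero_iff).mpr hdet0
    have hcj : c j = 0 := by
      have h1 : x ⬝ᵥ ((B.updateCol j 1) *ᵥ c) = 0 := by rw [hc]; simp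
      rw [Matrix.dotProduct_mulVec, hxBj j] at h1
      rw [show (Pi.single j 1 : Fin n → ℝ) ⬝ᵥ c = c j by
        simp only [dotProduct]
        rw [Finset.sum_eq_single j (fun m _ hm => by simp [Pi.single_eq_of_ne hm])
          (fun h => absurd (Finset.mem_univ j) h)]
        simp] at h1
      exact h1
    have hBc : B *ᵥ c = 0 := by
      funext m
      have h2 : (B *ᵥ c) m = ((B.updateCol j 1) *ᵥ c) m := by
        simp only [Matrix.mulVec, dotProduct, Matrix.updateCol_apply]
        apply Finset.sum_congr rfl
        intro k _
        by_cases h : k = j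
        · subst h; simp [hcj]
        · rw [if_neg h]
      rw [h2, hc]
    obtain ⟨α, rfl⟩ := hkerB c hBc
    have hαxj : α * x j = 0 := by simpa using hcj
    rcases mul_eq_zero.mp hαxj with h | h
    · exact hc0 (by rw [h, zero_smul])
    · exact (hxpos j).ne' h
  -- update column / mulVec lemma: if c j = 0 then B_j *ᵥ c = B *ᵥ c
  have hcol : ∀ (j : Fin n) (c : Fin n → ℝ), c j = 0 →
      (B.updateCol j 1) *ᵥ c = B *ᵥ c := by
    intro j c hcj
    funext m
    simp only [Matrix.mulVec, dotProduct, Matrix.updateCol_apply]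
    apply Finset.sum_congr rfl
    intro k _
    by_cases h : k = j
    · subst h; simp [hcj]
    · rw [if_neg h]
  -- B_j⁻¹ *ᵥ 1 = e_j
  have hMinv1 : ∀ j : Fin n, (B.updateCol j 1)⁻¹ *ᵥ (1 : Fin n → ℝ) = Pi.single j 1 := by
    intro j
    have h1 : (B.updateCol j 1) *ᵥ Pi.single j 1 = (1 : Fin n → ℝ) := by
      funext m
      simp only [Matrix.mulVec, dotProduct, Pi.one_apply]
      rw [Finset.sum_eq_single j]
      · simp [Matrix.updateCol_apply]
      · intro k _ hk; simp [Pi.single_eq_of_ne hk]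
      · intro h; exact absurd (Finset.mem_univ j) h
    have h2 : (B.updateCol j 1)⁻¹ *ᵥ ((B.updateCol j 1) *ᵥ Pi.single j 1)
        = Pi.single j 1 := by
      rw [Matrix.mulVec_mulVec, Matrix.nonsing_inv_mul _ (hdet j), Matrix.one_mulVec]
    rw [h1] at h2
    exact h2
  -- e_j ᵥ* B_j⁻¹ = x
  have hrowj : ∀ j : Fin n, (Pi.single j 1 : Fin n → ℝ) ᵥ* (B.updateCol j 1)⁻¹ = x := by
    intro j
    rw [← hxBj j, Matrix.vecMul_vecMul, Matrix.mul_nonsing_inv _ (hdet j), Matrix.vecMul_one]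
  -- positivity facts about xmin and phi
  set xmin := ⨅ i, x i with hxmin_def
  have hxmin_le : ∀ i, xmin ≤ x i := fun i => ciInf_le (Finite.bddBelow_range x) i
  haveI : Nonempty (Fin n) := ⟨⟨0, hn0⟩⟩
  have hxmin_pos : 0 < xmin := by
    obtain ⟨i0, hi0⟩ := Finite.exists_min x
    exact lt_of_lt_of_le (hxpos i0) (le_ciInf hi0)
  have hφle : ∀ j i' : Fin n,
      |((1 : Fin n → ℝ) ᵥ* (B.updateCol j 1)⁻¹ - x) i'| ≤ phi B x := by
    intro j i'
    have h1 : |((1 : Fin n → ℝ) ᵥ* (B.updateCol j 1)⁻¹ - x) i'| ≤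
        ⨆ i'' : Fin n, |((1 : Fin n → ℝ) ᵥ* (B.updateCol j 1)⁻¹ - x) i''| :=
      le_ciSup (f := fun i'' : Fin n =>
        |((1 : Fin n → ℝ) ᵥ* (B.updateCol j 1)⁻¹ - x) i''|) (Finite.bddAbove_range _) i'
    exact h1.trans (le_ciSup (f := fun j' : Fin n => ⨆ i'' : Fin n,
      |((1 : Fin n → ℝ) ᵥ* (B.updateCol j' 1)⁻¹ - x) i''|) (Finite.bddAbove_range _) j)
  have hφ0 : 0 ≤ phi B x :=
    le_trans (abs_nonneg _) (hφle ⟨0, hn0⟩ ⟨0, hn0⟩)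
  have hφpos : 0 < phi B x := by
    rcases hφ0.lt_or_eq with h | h
    · exact h
    · exfalso
      rw [← h, div_zero] at hε
      exact absurd (lt_of_le_of_lt hε0 hε) (lt_irrefl 0)
  have hεφ : ε * phi B x < xmin := (lt_div_iff₀ hφpos).mp hε
  -- main argument
  intro z hz
  obtain ⟨hz1, hzB⟩ := hz
  refine ⟨hz1, ?_⟩
  intro i
  set u : Fin n → ℝ := Pi.single i 1 - (x i) • (1 : Fin n → ℝ) with hu_def
  have hxu : x ⬝ᵥ u = 0 := by
    simp only [hu_def, dotProduct, Pi.sub_apply, Pi.smul_apply, Pi.one_apply,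
      smul_eq_mul, mul_sub, mul_one]
    rw [Finset.sum_sub_distrib]
    rw [Finset.sum_eq_single i (fun k _ hk => by simp [Pi.single_eq_of_ne hk])
      (fun h => absurd (Finset.mem_univ i) h)]
    simp [← Finset.sum_mul, hx1]
  -- particular solution y0 with B *ᵥ y0 = u
  set j₀ : Fin n := ⟨0, hn0⟩ with hj0_def
  set y0 : Fin n → ℝ := (B.updateCol j₀ 1)⁻¹ *ᵥ u with hy0_def
  have hy0j0 : y0 j₀ = 0 := by
    have h1 : y0 j₀ = ((Pi.single j₀ 1 : Fin n → ℝ) ᵥ* (B.updateCol j₀ 1)⁻¹) ⬝ᵥ u := by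
      simp only [hy0_def, Matrix.mulVec, Matrix.vecMul, dotProduct]
      apply Finset.sum_congr rfl
      intro k _
      congr 1
      rw [Finset.sum_eq_single j₀ (fun m _ hm => by simp [Pi.single_eq_of_ne hm])
        (fun h => absurd (Finset.mem_univ j₀) h)]
      simp
    rw [h1, hrowj j₀, hxu]
  have hBy0 : B *ᵥ y0 = u := by
    rw [← hcol j₀ y0 hy0j0, hy0_def, Matrix.mulVec_mulVec,
      Matrix.mul_nonsing_inv _ (hdet j₀), Matrix.one_mulVec]
  -- choose j maximizing -y0 k / x k
  obtain ⟨j, hj⟩ := Finite.exists_max (fun k => -y0 k / x k)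
  set y : Fin n → ℝ := y0 + (-y0 j / x j) • x with hy_def
  have hy_nonneg : ∀ k, 0 ≤ y k := by
    intro k
    have h1 : -y0 k / x k * x k ≤ -y0 j / x j * x k :=
      mul_le_mul_of_nonneg_right (hj k) (hxpos k).le
    have h2 : -y0 k / x k * x k = -y0 k := div_mul_cancel₀ _ (hxpos k).ne'
    simp only [hy_def, Pi.add_apply, Pi.smul_apply, smul_eq_mul]
    nlinarith [h1, h2]
  have hyj : y j = 0 := by
    simp only [hy_def, Pi.add_apply, Pi.smul_apply, smul_eq_mul]
    rw [div_mul_cancel₀ _ (hxpos j).ne']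
    ring
  have hBy : B *ᵥ y = u := by
    rw [hy_def, Matrix.mulVec_add, Matrix.mulVec_smul, hBx, hBy0]
    simp
  -- y = B_j⁻¹ *ᵥ u, so ∑ y = ((1 ᵥ* B_j⁻¹) - x) i
  have hy_eq : y = (B.updateCol j 1)⁻¹ *ᵥ u := by
    have h1 : (B.updateCol j 1) *ᵥ y = u := by rw [hcol j y hyj, hBy]
    have h2 : (B.updateCol j 1)⁻¹ *ᵥ ((B.updateCol j 1) *ᵥ y) = y := by
      rw [Matrix.mulVec_mulVec, Matrix.nonsing_inv_mul _ (hdet j), Matrix.one_mulVec]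
    rw [h1] at h2
    exact h2.symm
  have hsumy : ∑ k, y k = ((1 : Fin n → ℝ) ᵥ* (B.updateCol j 1)⁻¹ - x) i := by
    have h1 : ∑ k, y k = (1 : Fin n → ℝ) ⬝ᵥ ((B.updateCol j 1)⁻¹ *ᵥ u) := by
      rw [← hy_eq]; simp [dotProduct]
    rw [h1, Matrix.dotProduct_mulVec]
    set w := (1 : Fin n → ℝ) ᵥ* (B.updateCol j 1)⁻¹ with hw_def
    have hw1 : ∑ k, w k = 1 := by
      have h2 : w ⬝ᵥ (1 : Fin n → ℝ) = (1 : Fin n → ℝ) ⬝ᵥ ((B.updateCol j 1)⁻¹ *ᵥ 1) := by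
        rw [Matrix.dotProduct_mulVec]
      rw [hMinv1 j] at h2
      have h3 : (1 : Fin n → ℝ) ⬝ᵥ (Pi.single j 1 : Fin n → ℝ) = 1 := by
        simp only [dotProduct, Pi.one_apply, one_mul]
        rw [Finset.sum_eq_single j (fun m _ hm => Pi.single_eq_of_ne hm _)
          (fun h => absurd (Finset.mem_univ j) h)]
        simp
      rw [h3] at h2
      simpa [dotProduct] using h2
    simp only [hu_def, dotProduct, Pi.sub_apply, Pi.smul_apply, Pi.one_apply,
      smul_eq_mul, mul_sub, mul_one]
    rw [Finset.sum_sub_distrib]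
    rw [Finset.sum_eq_single i (fun k _ hk => by simp [Pi.single_eq_of_ne hk])
      (fun h => absurd (Finset.mem_univ i) h)]
    rw [← Finset.sum_mul, hw1]
    simp [mul_comm]
  have hsumy_le : ∑ k, y k ≤ phi B x :=
    hsumy ▸ (le_abs_self _).trans (hφle j i)
  -- conclude
  have hzu : z ⬝ᵥ u = z i - x i := by
    simp only [hu_def, dotProduct, Pi.sub_apply, Pi.smul_apply, Pi.one_apply,
      smul_eq_mul, mul_sub, mul_one]
    rw [Finset.sum_sub_distrib]
    rw [Finset.sum_eq_single i (fun k _ hk => by simp [Pi.single_eq_of_ne hk])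
      (fun h => absurd (Finset.mem_univ i) h)]
    rw [← Finset.sum_mul, hz1]
    simp [mul_comm]
  have hkey : z ⬝ᵥ u = (z ᵥ* B) ⬝ᵥ y := by
    rw [← hBy, Matrix.dotProduct_mulVec]
  have hlow : -(ε * (∑ k, y k)) ≤ (z ᵥ* B) ⬝ᵥ y := by
    have h1 : ∀ k ∈ Finset.univ, (-ε) * y k ≤ (z ᵥ* B) k * y k :=
      fun k _ => mul_le_mul_of_nonneg_right (hzB k) (hy_nonneg k)
    calc -(ε * ∑ k, y k) = ∑ k, (-ε) * y k := by rw [← Finset.mul_sum]; ring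
    _ ≤ ∑ k, (z ᵥ* B) k * y k := Finset.sum_le_sum h1
    _ = (z ᵥ* B) ⬝ᵥ y := rfl
  have h3 : ε * (∑ k, y k) ≤ ε * phi B x := mul_le_mul_of_nonneg_left hsumy_le hε0
  have h4 := hxmin_le i
  linarith [hlow, h3, hεφ, hzu, hkey, hxmin_le i]
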